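/- Second Law of Thermodynamics (Theorem 2, locally mixing dynamics): Let 𝒫 be a Boltzmann partition of Ω, let (U_k)_{k≥0} be measure-preserving bijections of (Ω, μ), and let (f_k)_{k≥0} be probability densities satisfying the local-mixing evolution law f_{k+1} = C(f_k ∘ U_k⁻¹) for all k. Assume for each k that f_k log f_k is μ-integrable and that Σ_{B∈𝒫} |p_k(B) log(p_k(B)/μ(B))| < ∞, where p_k(B) = ∫_B f_k dμ. Then the coarse-grained Gibbs entropy is monotonically non-decreasing: S_G[f_{k+1}] ≥ S_G[f_k] for every k. -/

import Mathlib

open MeasureTheory Set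

/-- The coarse-graining of a function `f` with respect to the partition `P`:
`(Cf)(x) = Σ_{B∈𝒫} (∫_B f dμ / μ(B)) χ_B(x)`. -/
noncomputable def coarseGrain {Ω : Type*} [MeasurableSpace Ω]
    (μ : Measure Ω) (P : ℕ → Set Ω) (f : Ω → ℝ) : Ω → ℝ :=
  fun x => ∑' n, Set.indicator (P n)
    (fun _ => (∫ y in P n, f y ∂μ) / (μ (P n)).toReal) x

/-- The Boltzmann state of a cell `A`: the probability density `ρ_A = χ_A / μ(A)`. -/
noncomputable def boltzmannState {Ω : Type*} [MeasurableSpace Ω]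
    (μ : Measure Ω) (A : Set Ω) : Ω → ℝ :=
  Set.indicator A (fun _ => ((μ A).toReal)⁻¹)

/-- The Gibbs entropy `S_G[ρ] = −∫ ρ log ρ dμ` (with `0 · log 0 = 0`). -/
noncomputable def gibbsEntropy {Ω : Type*} [MeasurableSpace Ω]
    (μ : Measure Ω) (ρ : Ω → ℝ) : ℝ :=
  - ∫ x, ρ x * Real.log (ρ x) ∂μ

/-- **Second Law of Thermodynamics** (Theorem 2, locally mixing dynamics): if probability
densities `f k` evolve by the local-mixing law `f (k+1) = C(f k ∘ (U k)⁻¹)` for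
measure-preserving bijections `U k`, and the stated integrability/summability conditions
hold, then the coarse-grained Gibbs entropy is monotonically non-decreasing. -/
theorem second_law_locally_mixing {Ω : Type*} [MeasurableSpace Ω]
    (μ : Measure Ω) [SigmaFinite μ]
    (P : ℕ → Set Ω) (hPmeas : ∀ n, MeasurableSet (P n))
    (hPdisj : Pairwise (Function.onFun Disjoint P)) (hPcover : (⋃ n, P n) = Set.univ)
    (hPpos : ∀ n, 0 < μ (P n)) (hPfin : ∀ n, μ (P n) < ⊤)
    (U : ℕ → Ω ≃ᵐ Ω) (hU : ∀ k, MeasurePreserving (U k) μ μ)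
    (f : ℕ → Ω → ℝ)
    (hfmeas : ∀ k, Measurable (f k)) (hf0 : ∀ k x, 0 ≤ f k x)
    (hfint : ∀ k, Integrable (f k) μ) (hf1 : ∀ k, ∫ x, f k x ∂μ = 1)
    (hevol : ∀ k, f (k + 1) = coarseGrain μ P (fun x => f k ((U k).symm x)))
    (hflog : ∀ k, Integrable (fun x => f k x * Real.log (f k x)) μ)
    (hsum : ∀ k, Summable (fun n =>
      |(∫ x in P n, f k x ∂μ) * Real.log ((∫ x in P n, f k x ∂μ) / (μ (P n)).toReal)|)) :
    ∀ k, gibbsEntropy μ (f k) ≤ gibbsEntropy μ (f (k + 1)) := by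
  intro k
  set g : Ω → ℝ := fun x => f k ((U k).symm x) with hg
  have hUsymm : MeasurePreserving ((U k).symm : Ω → Ω) μ μ := (hU k).symm
  have hemb : MeasurableEmbedding ((U k).symm : Ω → Ω) :=
    (U k).symm.measurableEmbedding
  set c : ℕ → ℝ := fun n => (∫ y in P n, g y ∂μ) / (μ (P n)).toReal with hc
  set p : ℕ → ℝ := fun n => ∫ y in P n, g y ∂μ with hp
  have hμpos : ∀ n, (0:ℝ) < (μ (P n)).toReal :=
    fun n => ENNReal.toReal_pos (hPpos n).ne' (hPfin n).ne
  -- f (k+1) is constant c n on each cell P n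
  have hconst : ∀ n, ∀ x ∈ P n, f (k+1) x = c n := by
    intro n x hx
    rw [hevol k]
    unfold coarseGrain
    rw [tsum_eq_single n]
    · exact Set.indicator_of_mem hx _
    · intro m hmn
      exact Set.indicator_of_notMem
        (fun hxm => Set.disjoint_left.1 (hPdisj hmn) hxm hx) _
  -- integrability of g and of g log g
  have hgint : Integrable g μ :=
    (hUsymm.integrable_comp_emb hemb).2 (hfint k)
  have hgint_log : Integrable (fun x => g x * Real.log (g x)) μ :=
    (hUsymm.integrable_comp_emb hemb).2 (hflog k)
  -- entropy invariance under the measure-preserving map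
  have hinv : ∫ x, g x * Real.log (g x) ∂μ = ∫ x, f k x * Real.log (f k x) ∂μ :=
    hUsymm.integral_comp' (fun y => f k y * Real.log (f k y))
  -- decomposition of ∫ g log g over the cells
  have hsum_g : HasSum (fun n => ∫ x in P n, g x * Real.log (g x) ∂μ)
      (∫ x, g x * Real.log (g x) ∂μ) := by
    have h := hasSum_integral_iUnion (f := fun x => g x * Real.log (g x))
      hPmeas hPdisj (by rw [hPcover]; exact hgint_log.integrableOn)
    rwa [hPcover, setIntegral_univ] at h
  -- decomposition of ∫ f(k+1) log f(k+1) over the cells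
  have hsum_h : HasSum (fun n => ∫ x in P n, f (k+1) x * Real.log (f (k+1) x) ∂μ)
      (∫ x, f (k+1) x * Real.log (f (k+1) x) ∂μ) := by
    have h := hasSum_integral_iUnion (f := fun x => f (k+1) x * Real.log (f (k+1) x))
      hPmeas hPdisj (by rw [hPcover]; exact (hflog (k+1)).integrableOn)
    rwa [hPcover, setIntegral_univ] at h
  -- each cell integral of f(k+1) log f(k+1) is p n * log (c n)
  have hcp : ∀ n, (μ (P n)).toReal * c n = p n := by
    intro n
    simp only [hc, hp]
    rw [mul_comm, div_mul_cancel₀ _ (hμpos n).ne']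
  have hterm : ∀ n, ∫ x in P n, f (k+1) x * Real.log (f (k+1) x) ∂μ
      = p n * Real.log (c n) := by
    intro n
    have h1 : EqOn (fun x => f (k+1) x * Real.log (f (k+1) x))
        (fun _ => c n * Real.log (c n)) (P n) := by
      intro x hx
      simp only
      rw [hconst n x hx]
    rw [setIntegral_congr_fun (hPmeas n) h1, setIntegral_const, measureReal_def, smul_eq_mul,
      ← mul_assoc, hcp n]
  -- Jensen's inequality on each cell
  have hjensen : ∀ n, p n * Real.log (c n)
      ≤ ∫ x in P n, g x * Real.log (g x) ∂μ := by
    intro n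
    have hfin : IsFiniteMeasure (μ.restrict (P n)) :=
      ⟨by rw [Measure.restrict_apply_univ]; exact hPfin n⟩
    have hne : NeZero (μ.restrict (P n)) :=
      ⟨by rw [Ne, Measure.restrict_eq_zero]; exact (hPpos n).ne'⟩
    have hjen := Real.convexOn_mul_log.map_average_le
      (μ := μ.restrict (P n)) (f := g)
      Real.continuous_mul_log.continuousOn isClosed_Ici
      (Filter.Eventually.of_forall (fun x => hf0 k _))
      hgint.integrableOn hgint_log.integrableOn
    rw [setAverage_eq, setAverage_eq, smul_eq_mul, smul_eq_mul, measureReal_def] at hjen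
    have havg : ((μ (P n)).toReal)⁻¹ * ∫ x in P n, g x ∂μ = c n := by
      rw [hc]; ring
    rw [havg] at hjen
    have := mul_le_mul_of_nonneg_left hjen (le_of_lt (hμpos n))
    calc p n * Real.log (c n)
        = (μ (P n)).toReal * (c n * Real.log (c n)) := by
          rw [← hcp n, mul_assoc]
      _ ≤ (μ (P n)).toReal * (((μ (P n)).toReal)⁻¹ * ∫ x in P n, g x * Real.log (g x) ∂μ) := this
      _ = ∫ x in P n, g x * Real.log (g x) ∂μ := by
          rw [← mul_assoc, mul_inv_cancel₀ (hμpos n).ne', one_mul]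
  -- put everything together
  have hsum_h' : HasSum (fun n => p n * Real.log (c n))
      (∫ x, f (k+1) x * Real.log (f (k+1) x) ∂μ) := by
    have := hsum_h
    simp_rw [hterm] at this
    exact this
  have hle : ∫ x, f (k+1) x * Real.log (f (k+1) x) ∂μ
      ≤ ∫ x, g x * Real.log (g x) ∂μ := by
    rw [← hsum_h'.tsum_eq, ← hsum_g.tsum_eq]
    exact Summable.tsum_le_tsum hjensen hsum_h'.summable hsum_g.summable
  rw [hinv] at hle
  unfold gibbsEntropy
  linarith
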